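/- Let α > 0 and let K ⊂ ℤ²∖{(0,0)} be a finite set symmetric under k ↦ −k. Suppose ω : ℝ → (K → ℝ) is differentiable, satisfies ω_{−k}(t) = ω_k(t) for all k ∈ K and t, and solves the Galerkin-truncated 2D Euler system dω_k/dt = Σ_{m,n∈K, m+n=k} A(m,n) ω_m ω_n for every k ∈ K. Then the truncated kinetic energy E(t) = Σ_{k∈K} (k₁² + (αk₂)²)⁻¹ ω_k(t)² is constant in t. -/

import Mathlib

/-- The interaction coefficient
`A(m,n) = (α/2)·[1/(n₁²+(αn₂)²) − 1/(m₁²+(αm₂)²)]·(m₁n₂ − m₂n₁)`. -/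
noncomputable def coefA (α : ℝ) (m n : ℤ × ℤ) : ℝ :=
  (α / 2) * (1 / ((n.1 : ℝ) ^ 2 + (α * (n.2 : ℝ)) ^ 2)
      - 1 / ((m.1 : ℝ) ^ 2 + (α * (m.2 : ℝ)) ^ 2)) *
    ((m.1 : ℝ) * (n.2 : ℝ) - (m.2 : ℝ) * (n.1 : ℝ))


lemma cycA (α : ℝ) (m n k : ℤ × ℤ) (h : m + n + k = 0) :
    ((k.1 : ℝ) ^ 2 + (α * (k.2 : ℝ)) ^ 2)⁻¹ * coefA α m n
      + ((m.1 : ℝ) ^ 2 + (α * (m.2 : ℝ)) ^ 2)⁻¹ * coefA α n k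
      + ((n.1 : ℝ) ^ 2 + (α * (n.2 : ℝ)) ^ 2)⁻¹ * coefA α k m = 0 := by
  have e1 := congrArg Prod.fst h
  have e2 := congrArg Prod.snd h
  simp only [Prod.fst_add, Prod.snd_add, Prod.fst_zero, Prod.snd_zero] at e1 e2
  have h1 : k.1 = -m.1 - n.1 := by omega
  have h2 : k.2 = -m.2 - n.2 := by omega
  simp only [coefA, h1, h2]
  push_cast
  ring

lemma sum_cyc {M : Type*} [AddCommMonoid M] (K : Finset (ℤ × ℤ))
    (F : (ℤ × ℤ) → (ℤ × ℤ) → (ℤ × ℤ) → M) :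
    ∑ m ∈ K, ∑ n ∈ K, ∑ k ∈ K, F m n k = ∑ m ∈ K, ∑ n ∈ K, ∑ k ∈ K, F n k m := by
  conv_rhs => rw [Finset.sum_comm]
  exact Finset.sum_congr rfl fun a _ => Finset.sum_comm

/-- For any symmetric Galerkin truncation of the 2D Euler equation in the real
(cosine) invariant subspace, the truncated kinetic energy `E = Σ_{k∈K} (k₁² + (αk₂)²)⁻¹ ω_k²` is
conserved. -/
theorem galerkin_energy_conserved
    (α : ℝ) (hα : 0 < α)
    (K : Finset (ℤ × ℤ)) (hK0 : (0, 0) ∉ K) (hKsym : ∀ k ∈ K, -k ∈ K)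
    (ω : ℝ → ℤ × ℤ → ℝ)
    (hdiff : ∀ k ∈ K, Differentiable ℝ (fun t => ω t k))
    (hreal : ∀ t : ℝ, ∀ k ∈ K, ω t (-k) = ω t k)
    (heqn : ∀ k ∈ K, ∀ t : ℝ,
      deriv (fun s => ω s k) t
        = ∑ m ∈ K, ∑ n ∈ K,
            (if m + n = k then coefA α m n * ω t m * ω t n else 0)) :
    ∀ t s : ℝ,
      (∑ k ∈ K, ((k.1 : ℝ) ^ 2 + (α * (k.2 : ℝ)) ^ 2)⁻¹ * (ω t k) ^ 2)
        = ∑ k ∈ K, ((k.1 : ℝ) ^ 2 + (α * (k.2 : ℝ)) ^ 2)⁻¹ * (ω s k) ^ 2 := by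
  set c : ℤ × ℤ → ℝ := fun k => ((k.1 : ℝ) ^ 2 + (α * (k.2 : ℝ)) ^ 2)⁻¹ with hc
  set E : ℝ → ℝ := fun t => ∑ k ∈ K, c k * (ω t k) ^ 2 with hE
  have hEderiv : ∀ t : ℝ, HasDerivAt E
      (∑ k ∈ K, c k * (2 * ω t k * deriv (fun s => ω s k) t)) t := by
    intro t
    apply HasDerivAt.fun_sum
    intro k hk
    have h1 : HasDerivAt (fun s => ω s k) (deriv (fun s => ω s k) t) t :=
      ((hdiff k hk) t).hasDerivAt
    have h2 := (h1.pow 2).const_mul (c k)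
    simpa [mul_comm, mul_assoc, mul_left_comm] using h2
  have hEzero : ∀ t : ℝ, deriv E t = 0 := by
    intro t
    rw [(hEderiv t).deriv]
    -- rewrite using the equation
    have step1 : (∑ k ∈ K, c k * (2 * ω t k * deriv (fun s => ω s k) t))
        = ∑ k ∈ K, ∑ m ∈ K, ∑ n ∈ K,
            (if m + n = k then 2 * (c k * coefA α m n * ω t m * ω t n * ω t k) else 0) := by
      refine Finset.sum_congr rfl fun k hk => ?_
      rw [heqn k hk t]
      simp only [Finset.mul_sum]
      refine Finset.sum_congr rfl fun m _ => Finset.sum_congr rfl fun n _ => ?_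
      by_cases h : m + n = k <;> simp [h] <;> ring
    rw [step1]
    -- move k innermost
    rw [Finset.sum_comm]
    have step2 : (∑ m ∈ K, ∑ k ∈ K, ∑ n ∈ K,
            (if m + n = k then 2 * (c k * coefA α m n * ω t m * ω t n * ω t k) else 0))
        = ∑ m ∈ K, ∑ n ∈ K, ∑ k ∈ K,
            (if m + n = k then 2 * (c k * coefA α m n * ω t m * ω t n * ω t k) else 0) :=
      Finset.sum_congr rfl fun m _ => Finset.sum_comm
    rw [step2]
    -- reindex k ↦ -k
    have step3 : (∑ m ∈ K, ∑ n ∈ K, ∑ k ∈ K,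
            (if m + n = k then 2 * (c k * coefA α m n * ω t m * ω t n * ω t k) else 0))
        = ∑ m ∈ K, ∑ n ∈ K, ∑ k ∈ K,
            (if m + n + k = 0 then 2 * (c k * coefA α m n * ω t m * ω t n * ω t k) else 0) := by
      refine Finset.sum_congr rfl fun m _ => Finset.sum_congr rfl fun n _ => ?_
      refine Finset.sum_equiv (Equiv.neg (ℤ × ℤ)) (fun k => ?_) (fun k hk => ?_)
      · constructor
        · intro h; exact hKsym k h
        · intro h; simpa using hKsym _ h
      · have hck : c (-k) = c k := by
          simp only [hc, Prod.fst_neg, Prod.snd_neg]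
          push_cast; ring_nf
        have hω : ω t (-k) = ω t k := hreal t k hk
        have hcond : (m + n = k) ↔ (m + n + (-k) = 0) := by
          constructor
          · intro h; rw [h]; abel
          · intro h
            have h' : m + n - k = 0 := by rwa [sub_eq_add_neg]
            exact sub_eq_zero.mp h'
        simp only [Equiv.neg_apply, hck, hω]
        by_cases h : m + n = k
        · rw [if_pos h, if_pos (hcond.mp h)]
        · rw [if_neg h, if_neg (fun hh => h (hcond.mpr hh))]
    rw [step3]
    -- now the cyclic cancellation
    set F : (ℤ × ℤ) → (ℤ × ℤ) → (ℤ × ℤ) → ℝ := fun m n k =>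
      if m + n + k = 0 then 2 * (c k * coefA α m n * ω t m * ω t n * ω t k) else 0 with hF
    have hcyc1 : ∑ m ∈ K, ∑ n ∈ K, ∑ k ∈ K, F m n k
        = ∑ m ∈ K, ∑ n ∈ K, ∑ k ∈ K, F n k m := sum_cyc K F
    have hcyc2 : ∑ m ∈ K, ∑ n ∈ K, ∑ k ∈ K, F m n k
        = ∑ m ∈ K, ∑ n ∈ K, ∑ k ∈ K, F k m n := by
      rw [sum_cyc K F, sum_cyc K (fun m n k => F n k m)]
    have hptw : ∀ m n k : ℤ × ℤ, F m n k + F n k m + F k m n = 0 := by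
      intro m n k
      by_cases h : m + n + k = 0
      · have h2 : n + k + m = 0 := by rw [← h]; abel
        have h3 : k + m + n = 0 := by rw [← h]; abel
        simp only [hF, if_pos h, if_pos h2, if_pos h3]
        have := cycA α m n k h
        linear_combination (2 * ω t m * ω t n * ω t k) * this
      · have h2 : ¬ (n + k + m = 0) := fun hh => h (by rw [← hh]; abel)
        have h3 : ¬ (k + m + n = 0) := fun hh => h (by rw [← hh]; abel)
        simp [hF, if_neg h, if_neg h2, if_neg h3]
    have h3S : (3 : ℝ) * (∑ m ∈ K, ∑ n ∈ K, ∑ k ∈ K, F m n k) = 0 := by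
      calc (3 : ℝ) * (∑ m ∈ K, ∑ n ∈ K, ∑ k ∈ K, F m n k)
          = (∑ m ∈ K, ∑ n ∈ K, ∑ k ∈ K, F m n k)
            + (∑ m ∈ K, ∑ n ∈ K, ∑ k ∈ K, F n k m)
            + (∑ m ∈ K, ∑ n ∈ K, ∑ k ∈ K, F k m n) := by
            rw [← hcyc1, ← hcyc2]; ring
        _ = ∑ m ∈ K, ∑ n ∈ K, ∑ k ∈ K, (F m n k + F n k m + F k m n) := by
            rw [← Finset.sum_add_distrib, ← Finset.sum_add_distrib]
            refine Finset.sum_congr rfl fun m _ => ?_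
            rw [← Finset.sum_add_distrib, ← Finset.sum_add_distrib]
            refine Finset.sum_congr rfl fun n _ => ?_
            rw [← Finset.sum_add_distrib, ← Finset.sum_add_distrib]
        _ = 0 := by simp [hptw]
    have : (∑ m ∈ K, ∑ n ∈ K, ∑ k ∈ K, F m n k) = 0 := by linarith
    exact this
  have hEdiff : Differentiable ℝ E := fun t => (hEderiv t).differentiableAt
  exact is_const_of_deriv_eq_zero hEdiff hEzero
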